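/- arXiv:2007.05907 — 2 statements merged into one kernel-verified Lean document; each statement's English description precedes it below -/
import Mathlib

section
/- Given a target state (x, y, v_x, v_y) with y > 0 and two distinct sensor positions l_i ≠ l_j on the x-axis, the full state (x, y, v_x, v_y) with y > 0 is uniquely determined by the two range-Doppler pairs (r_i, d_i) and (r_j, d_j). -/
theorem stmt_9 (li lj : ℝ) (hij : li ≠ lj)
    (x y vx vy x' y' vx' vy' : ℝ) (hy : 0 < y) (hy' : 0 < y')
    (hri : Real.sqrt ((x - li)^2 + y^2) = Real.sqrt ((x' - li)^2 + y'^2))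
    (hrj : Real.sqrt ((x - lj)^2 + y^2) = Real.sqrt ((x' - lj)^2 + y'^2))
    (hdi : ((x - li)*vx + y*vy)/Real.sqrt ((x - li)^2 + y^2)
         = ((x' - li)*vx' + y'*vy')/Real.sqrt ((x' - li)^2 + y'^2))
    (hdj : ((x - lj)*vx + y*vy)/Real.sqrt ((x - lj)^2 + y^2)
         = ((x' - lj)*vx' + y'*vy')/Real.sqrt ((x' - lj)^2 + y'^2)) :
    x = x' ∧ y = y' ∧ vx = vx' ∧ vy = vy' := by
  have hpi : (0:ℝ) < (x - li)^2 + y^2 := by positivity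
  have hpj : (0:ℝ) < (x - lj)^2 + y^2 := by positivity
  have hpi' : (0:ℝ) < (x' - li)^2 + y'^2 := by positivity
  have hpj' : (0:ℝ) < (x' - lj)^2 + y'^2 := by positivity
  have ei : (x - li)^2 + y^2 = (x' - li)^2 + y'^2 := by
    have := congrArg (·^2) hri
    simpa [Real.sq_sqrt hpi.le, Real.sq_sqrt hpi'.le] using this
  have ej : (x - lj)^2 + y^2 = (x' - lj)^2 + y'^2 := by
    have := congrArg (·^2) hrj
    simpa [Real.sq_sqrt hpj.le, Real.sq_sqrt hpj'.le] using this
  have hx : x = x' := by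
    have h : (lj - li) * (2 * x) = (lj - li) * (2 * x') := by nlinarith [ei, ej]
    have := mul_left_cancel₀ (sub_ne_zero.mpr (Ne.symm hij)) h
    linarith
  subst hx
  have hyy : y = y' := by
    have : y^2 = y'^2 := by nlinarith [ei]
    nlinarith
  subst hyy
  have hsi : Real.sqrt ((x - li)^2 + y^2) ≠ 0 := (Real.sqrt_pos.mpr hpi).ne'
  have hsj : Real.sqrt ((x - lj)^2 + y^2) ≠ 0 := (Real.sqrt_pos.mpr hpj).ne'
  rw [hri] at hdi hsi
  rw [hrj] at hdj hsj
  have ni : (x - li)*vx + y*vy = (x - li)*vx' + y*vy' :=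
    by field_simp at hdi; linarith [hdi]
  have nj : (x - lj)*vx + y*vy = (x - lj)*vx' + y*vy' :=
    by field_simp at hdj; linarith [hdj]
  have hvx : vx = vx' := by
    have h : (lj - li) * vx = (lj - li) * vx' := by nlinarith [ni, nj]
    exact mul_left_cancel₀ (sub_ne_zero.mpr (Ne.symm hij)) h
  subst hvx
  have hvy : vy = vy' := by
    have : y * vy = y * vy' := by linarith [ni]
    exact mul_left_cancel₀ hy.ne' this
  exact ⟨rfl, rfl, rfl, hvy⟩
end

section
/- Let u = -H(HᵀH)⁻¹e₁ with H = [l, 1] ∈ ℝ^{n×2} full column rank and e₁ = (1,0)ᵀ. If q₂ ∈ ℝⁿ has entries (q₂)_i = r_i² where r_i² = (x - l_i)² + y², then uᵀ(q₂ - l∘l)/2 = x, where l∘l denotes the entrywise square of l. -/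
open Matrix

theorem stmt_17 {n : ℕ} (hn : 2 ≤ n) (l : Fin n → ℝ) (hl : ∃ i j, l i ≠ l j)
    (H : Matrix (Fin n) (Fin 2) ℝ) (hH : ∀ i, H i 0 = l i ∧ H i 1 = 1)
    (hrank : H.rank = 2)
    (u : Fin n → ℝ) (hu : u = -(H * (Hᵀ * H)⁻¹).mulVec ![1, 0])
    (x y : ℝ) (r : Fin n → ℝ) (hr : ∀ i, (r i)^2 = (x - l i)^2 + y^2)
    (q₂ : Fin n → ℝ) (hq₂ : ∀ i, q₂ i = (r i)^2) :
    (∑ i, u i * (q₂ i - l i * l i)) / 2 = x := by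
  set G := Hᵀ * H with hG
  have hGrank : G.rank = 2 := by rw [hG, Matrix.rank_transpose_mul_self, hrank]
  have hGunit : IsUnit G := by
    rw [← Matrix.mulVec_injective_iff_isUnit]
    have := Matrix.rank_eq_finrank_range_toLin G (Pi.basisFun ℝ (Fin 2)) (Pi.basisFun ℝ (Fin 2))
    have htop : LinearMap.range G.mulVecLin = ⊤ := by
      apply Submodule.eq_top_of_finrank_eq
      rw [← Matrix.rank, hGrank]
      simp
    have hsurj : Function.Surjective G.mulVecLin := LinearMap.range_eq_top.mp htop
    have hinj : Function.Injective G.mulVecLin :=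
      (LinearMap.injective_iff_surjective).mpr hsurj
    exact hinj
  have hdet : IsUnit G.det := (Matrix.isUnit_iff_isUnit_det G).mp hGunit
  have hGsym : Gᵀ = G := by rw [hG, transpose_mul, transpose_transpose]
  have key : u ᵥ* H = -![1, 0] := by
    rw [hu, Matrix.neg_vecMul]
    congr 1
    rw [← Matrix.vecMul_transpose, Matrix.vecMul_vecMul, Matrix.transpose_mul,
      Matrix.transpose_nonsing_inv, hGsym, Matrix.mul_assoc, ← hG,
      Matrix.nonsing_inv_mul G hdet, Matrix.vecMul_one]
  have k0 : ∑ i, u i * l i = -1 := by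
    have := congrFun key 0
    simpa [Matrix.vecMul, dotProduct, (hH _).1] using this
  have k1 : ∑ i, u i = 0 := by
    have := congrFun key 1
    simpa [Matrix.vecMul, dotProduct, (hH _).2] using this
  have hsum : ∑ i, u i * (q₂ i - l i * l i)
      = (-2*x) * (∑ i, u i * l i) + (x^2 + y^2) * (∑ i, u i) := by
    rw [Finset.mul_sum, Finset.mul_sum, ← Finset.sum_add_distrib]
    apply Finset.sum_congr rfl
    intro i _
    rw [hq₂, hr]
    ring
  rw [hsum, k0, k1]
  ring
end
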